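/- Let ω = e^{2πi/3} ∈ ℂ, n ≥ 0 an integer, and A ⊆ {1,ω,ω²}^n trifferent. Let P be a set of ordered pairs of distinct elements of A containing exactly one of (x,y) and (y,x) for each unordered pair {x,y} of distinct elements of A. Then the family of functions ((z,t) ↦ f_{x,y}(z,t))_{(x,y)∈P}, viewed as elements of the ℂ-vector space of functions from {(z,t) ∈ A × A : z ≠ t} to ℂ, is linearly independent over ℂ. -/

import Mathlib

open scoped BigOperators
open Classical

noncomputable section

namespace SlicePaper

/-- Shannon entropy of the `i`-th coordinate marginal of a distribution `p` on `Δ`. -/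
def margEnt {ι : Type*} [Fintype ι] (Δ : Finset (ι → ℤ)) (p : (ι → ℤ) → ℝ) (i : ι) : ℝ :=
  -∑ α ∈ Δ.image (fun γ => γ i),
      (∑ γ ∈ Δ.filter (fun γ => γ i = α), p γ) *
        Real.log (∑ γ ∈ Δ.filter (fun γ => γ i = α), p γ)

/-- The entropy `H(Δ)` of a finite set of integer tuples. -/
def HSet {ι : Type*} [Fintype ι] (Δ : Finset (ι → ℤ)) : ℝ :=
  sSup {e : ℝ | ∃ p : (ι → ℤ) → ℝ, (∀ γ, 0 ≤ p γ) ∧ (∀ γ, p γ ≠ 0 → γ ∈ Δ) ∧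
    (∑ γ ∈ Δ, p γ) = 1 ∧ e = ⨅ i, margEnt Δ p i}

/-- Maximal elements of `Δ` w.r.t. the product of the linear orders `σ i`. -/
def maxElems {ι : Type*} [Fintype ι] (σ : ι → LinearOrder ℤ) (Δ : Finset (ι → ℤ)) :
    Finset (ι → ℤ) :=
  Δ.filter (fun γ => ∀ δ ∈ Δ, (∀ i, (σ i).le (γ i) (δ i)) → γ = δ)

/-- `ξ k = log (k / (k-1)^((k-1)/k))`. -/
def xi (k : ℕ) : ℝ :=
  Real.log ((k : ℝ) / ((k : ℝ) - 1) ^ (((k : ℝ) - 1) / (k : ℝ)))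

/-- Slice rank of a coefficient array `c`. -/
def sliceRank {k : ℕ} (F : Type*) [Field F] (τ : Fin k → Type*) [∀ i, Fintype (τ i)]
    (c : (∀ i, τ i) → F) : ℕ :=
  sInf {r : ℕ | ∃ j : Fin r → Fin k, ∃ a : ∀ l : Fin r, τ (j l) → F,
    ∃ b : ∀ l : Fin r, (((i : {i : Fin k // i ≠ j l}) → τ i.1) → F),
    ∀ s : ∀ i, τ i, c s = ∑ l : Fin r, a l (s (j l)) * b l (fun i => s i.1)}

/-- `n`-th tensor power of a coefficient array. -/
def tpow {k : ℕ} {F : Type*} [Field F] {τ : Fin k → Type*} (c : (∀ i, τ i) → F) (n : ℕ) :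
    (∀ i, Fin n → τ i) → F :=
  fun u => ∏ m : Fin n, c (fun i => u i m)

/-- Support of a coefficient array, as a finite set of integer tuples. -/
def support {k : ℕ} {F : Type*} [Field F] (S : Fin k → Finset ℤ)
    (c : (∀ i, {x : ℤ // x ∈ S i}) → F) : Finset (Fin k → ℤ) :=
  (Finset.univ.filter (fun s : ∀ i, {x : ℤ // x ∈ S i} => c s ≠ 0)).image
    (fun s i => (s i : ℤ))

/-- Section `Γ_I^x`: restrictions to coordinates outside `I` of the γ ∈ Γ agreeing with x on I. -/
def sect {k : ℕ} (Γ : Finset (Fin k → ℤ)) (I : Finset (Fin k)) (x : Fin k → ℤ) :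
    Finset ({i : Fin k // i ∉ I} → ℤ) :=
  (Γ.filter (fun γ => ∀ i ∈ I, γ i = x i)).image (fun γ i => γ i.1)

/-- Section along a single coordinate. -/
def sect1 {k : ℕ} (Γ : Finset (Fin k → ℤ)) (i : Fin k) (a : ℤ) :
    Finset ({j : Fin k // j ≠ i} → ℤ) :=
  (Γ.filter (fun γ => γ i = a)).image (fun γ j => γ j.1)

/-- Trifferent set of strings. -/
def trifferent {n : ℕ} {α : Type*} (A : Finset (Fin n → α)) : Prop :=
  ∀ x ∈ A, ∀ y ∈ A, ∀ z ∈ A, x ≠ y → y ≠ z → x ≠ z →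
    ∃ i, x i ≠ y i ∧ y i ≠ z i ∧ x i ≠ z i

/-- The cube root of unity `ω = e^{2πi/3}`. -/
def w : ℂ := Complex.exp (2 * Real.pi * Complex.I / 3)

/-- The tensor `f_{x,y}(z,t)` used for the trifference problem. -/
def f {n : ℕ} (x y z t : Fin n → ℂ) : ℂ :=
  ∏ i, (x i + y i + z i) * (x i + y i + t i)

/-- Monomial functions `g_{α,β}`. -/
def g {n : ℕ} (α β : Fin n → ℕ) : (Fin n → ℂ) × (Fin n → ℂ) → ℂ :=
  fun q => ∏ i, (q.1 i + q.2 i) ^ α i * (q.1 i * q.2 i) ^ β i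


lemma abs_w : ‖w‖ = 1 := by
  simp [w, Complex.norm_exp]

lemma w_ne_zero : w ≠ 0 := by
  intro h
  have := abs_w
  rw [h] at this
  simp at this

lemma w_cube : w ^ 3 = 1 := by
  rw [w, ← Complex.exp_nat_mul]
  rw [show (3 : ℕ) * (2 * (Real.pi : ℂ) * Complex.I / 3) = 2 * Real.pi * Complex.I by
    push_cast; ring]
  exact Complex.exp_two_pi_mul_I

lemma w_ne_one : w ≠ 1 := by
  have him : w.im = Real.sin (2 * Real.pi / 3) := by
    rw [w, show 2 * (Real.pi : ℂ) * Complex.I / 3 = ((2 * Real.pi / 3 : ℝ) : ℂ) * Complex.I by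
      push_cast; ring]
    rw [Complex.exp_ofReal_mul_I_im]
  intro h
  have : Real.sin (2 * Real.pi / 3) = 0 := by
    rw [← him, h]; simp
  have hpos : 0 < Real.sin (2 * Real.pi / 3) := by
    apply Real.sin_pos_of_pos_of_lt_pi
    · positivity
    · nlinarith [Real.pi_pos]
  linarith

lemma one_add_w : (1 : ℂ) + w + w ^ 2 = 0 := by
  have h : (w - 1) * (1 + w + w ^ 2) = 0 := by
    linear_combination w_cube
  rcases mul_eq_zero.mp h with h' | h'
  · exact absurd (by linear_combination h') w_ne_one
  · exact h'

lemma w_ne_wsq : w ≠ w ^ 2 := by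
  intro h
  have : w * (w - 1) = 0 := by linear_combination -h
  rcases mul_eq_zero.mp this with h' | h'
  · exact w_ne_zero h'
  · exact w_ne_one (by linear_combination h')

lemma one_ne_wsq : (1 : ℂ) ≠ w ^ 2 := by
  intro h
  have : w = 1 := by
    calc w = w * 1 := by ring
    _ = w * w ^ 2 := by rw [h]
    _ = w ^ 3 := by ring
    _ = 1 := w_cube
  exact w_ne_one this

lemma abs_mem (a : ℂ) (ha : a ∈ ({1, w, w ^ 2} : Set ℂ)) : ‖a‖ = 1 := by
  simp only [Set.mem_insert_iff, Set.mem_singleton_iff] at ha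
  rcases ha with rfl | rfl | rfl
  · simp
  · exact abs_w
  · rw [norm_pow, abs_w]; norm_num

lemma double_ne {a b : ℂ} (ha : ‖a‖ = 1) (hb : ‖b‖ = 1) :
    a + a + b ≠ 0 := by
  intro h
  have hb' : b = -(2 * a) := by linear_combination h
  have : ‖b‖ = 2 * ‖a‖ := by
    rw [hb', norm_neg, norm_mul, Complex.norm_two]
  rw [ha, hb] at this
  norm_num at this

lemma sum_distinct {a b c : ℂ} (ha : a ∈ ({1, w, w ^ 2} : Set ℂ))
    (hb : b ∈ ({1, w, w ^ 2} : Set ℂ)) (hc : c ∈ ({1, w, w ^ 2} : Set ℂ))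
    (hab : a ≠ b) (hbc : b ≠ c) (hac : a ≠ c) : a + b + c = 0 := by
  simp only [Set.mem_insert_iff, Set.mem_singleton_iff] at ha hb hc
  rcases ha with rfl | rfl | rfl <;> rcases hb with rfl | rfl | rfl <;>
    rcases hc with rfl | rfl | rfl <;>
      first
        | exact absurd rfl hab
        | exact absurd rfl hbc
        | exact absurd rfl hac
        | exact absurd w_ne_one.symm hab
        | exact absurd one_ne_wsq.symm hab
        | exact absurd w_ne_wsq.symm hab
        | exact absurd w_ne_one.symm hbc
        | exact absurd one_ne_wsq.symm hbc
        | exact absurd w_ne_wsq.symm hbc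
        | exact absurd w_ne_one.symm hac
        | exact absurd one_ne_wsq.symm hac
        | exact absurd w_ne_wsq.symm hac
        | linear_combination one_add_w

lemma f_zero_left {n : ℕ} {A : Finset (Fin n → ℂ)}
    (hA : ∀ x ∈ A, ∀ i, x i ∈ ({1, w, w ^ 2} : Set ℂ))
    (htrif : trifferent A) {x y z : Fin n → ℂ}
    (hx : x ∈ A) (hy : y ∈ A) (hz : z ∈ A)
    (hxy : x ≠ y) (hyz : y ≠ z) (hxz : x ≠ z) (t : Fin n → ℂ) :
    f x y z t = 0 := by
  obtain ⟨i, h1, h2, h3⟩ := htrif x hx y hy z hz hxy hyz hxz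
  unfold f
  apply Finset.prod_eq_zero (Finset.mem_univ i)
  rw [sum_distinct (hA x hx i) (hA y hy i) (hA z hz i) h1 h2 h3, zero_mul]

lemma f_zero_right {n : ℕ} {A : Finset (Fin n → ℂ)}
    (hA : ∀ x ∈ A, ∀ i, x i ∈ ({1, w, w ^ 2} : Set ℂ))
    (htrif : trifferent A) {x y t : Fin n → ℂ}
    (hx : x ∈ A) (hy : y ∈ A) (ht : t ∈ A)
    (hxy : x ≠ y) (hyt : y ≠ t) (hxt : x ≠ t) (z : Fin n → ℂ) :
    f x y z t = 0 := by
  obtain ⟨i, h1, h2, h3⟩ := htrif x hx y hy t ht hxy hyt hxt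
  unfold f
  apply Finset.prod_eq_zero (Finset.mem_univ i)
  rw [sum_distinct (hA x hx i) (hA y hy i) (hA t ht i) h1 h2 h3, mul_zero]

lemma f_self_ne_zero {n : ℕ} {A : Finset (Fin n → ℂ)}
    (hA : ∀ x ∈ A, ∀ i, x i ∈ ({1, w, w ^ 2} : Set ℂ))
    {x y : Fin n → ℂ} (hx : x ∈ A) (hy : y ∈ A) :
    f x y x y ≠ 0 := by
  unfold f
  rw [Finset.prod_ne_zero_iff]
  intro i _
  have hax := abs_mem _ (hA x hx i)
  have hay := abs_mem _ (hA y hy i)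
  apply mul_ne_zero
  · intro h
    exact double_ne hax hay (by linear_combination h)
  · intro h
    exact double_ne hay hax (by linear_combination h)

/-- the functions `f_{x,y}`, for one representative `(x,y)` of each
unordered pair of distinct elements of a trifferent set `A`, are linearly independent
as functions on `{(z,t) ∈ A × A : z ≠ t}`. -/
theorem stmt17 {n : ℕ} (A : Finset (Fin n → ℂ))
    (hA : ∀ x ∈ A, ∀ i, x i ∈ ({1, w, w ^ 2} : Set ℂ))
    (htrif : trifferent A)
    (P : Finset ((Fin n → ℂ) × (Fin n → ℂ)))
    (hP1 : ∀ p ∈ P, p.1 ∈ A ∧ p.2 ∈ A ∧ p.1 ≠ p.2)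
    (hP2 : ∀ x ∈ A, ∀ y ∈ A, x ≠ y → ((x, y) ∈ P ↔ (y, x) ∉ P)) :
    LinearIndependent ℂ (fun p : P =>
      (fun q : {q : (Fin n → ℂ) × (Fin n → ℂ) // q.1 ∈ A ∧ q.2 ∈ A ∧ q.1 ≠ q.2} =>
        f p.1.1 p.1.2 q.1.1 q.1.2)) := by
  rw [Fintype.linearIndependent_iff]
  intro c hc p
  obtain ⟨hx, hy, hxy⟩ := hP1 p.1 p.2
  set x := p.1.1
  set y := p.1.2
  have hyxP : (y, x) ∉ P := by
    have hiff := hP2 x hx y hy hxy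
    exact hiff.mp p.2
  have hev := congrFun hc ⟨p.1, hx, hy, hxy⟩
  simp only [Finset.sum_apply, Pi.smul_apply, smul_eq_mul, Pi.zero_apply] at hev
  have hsum : ∑ p' : P, c p' * f p'.1.1 p'.1.2 x y = 0 := hev
  rw [Fintype.sum_eq_single p ?_] at hsum
  · have := f_self_ne_zero hA hx hy
    exact (mul_eq_zero.mp hsum).resolve_right this
  · intro p' hp'
    obtain ⟨hx', hy', hxy'⟩ := hP1 p'.1 p'.2
    set x' := p'.1.1
    set y' := p'.1.2
    suffices h : f x' y' x y = 0 by rw [h, mul_zero]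
    by_cases hxx : x = x'
    · -- x = x', so y ≠ y' (else p' = p), and y ≠ x'
      have hyy : y ≠ y' := by
        intro h
        apply hp'
        apply Subtype.ext
        exact Prod.ext hxx.symm h.symm
      have hyx' : y ≠ x' := by rw [← hxx]; exact fun h => hxy h.symm
      exact f_zero_right hA htrif hx' hy' hy hxy' (fun h => hyy h.symm)
        (fun h => hyx' h.symm) x
    · by_cases hxy' : x = y'
      · -- x = y', so y ≠ x' (else p'.1 = (y, x) ∈ P, contradiction)
        have hyx' : y ≠ x' := by
          intro h
          apply hyxP
          have : p'.1 = (y, x) := Prod.ext h.symm hxy'.symm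
          rw [← this]
          exact p'.2
        have hyy : y ≠ y' := by rw [← hxy']; exact fun h => hxy h.symm
        exact f_zero_right hA htrif hx' hy' hy ‹x' ≠ y'›
          (fun h => hyy h.symm) (fun h => hyx' h.symm) x
      · -- x ∉ {x', y'}
        exact f_zero_left hA htrif hx' hy' hx ‹x' ≠ y'›
          (fun h => hxy' h.symm) (fun h => hxx h.symm) y

end SlicePaper
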